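/- Assume (A.2) and (A.3) and fix θ ∈ Θ. Define Ψ(s, θ) = ∫ φ(s, ε, θ) Q(dε) and, for κ > 0, Ψ^κ(s, θ) = ∫ φ(proj_S[s + κe], ε, θ) Q(dε). Then Ψ(·, θ) is continuous, hence uniformly continuous, on the compact set S; for every sequence of positive scalars κ_j → 0, the functions Ψ^{κ_j}(·, θ) converge uniformly on S to Ψ(·, θ); and consequently d(φ^{κ_j}(·,·,θ), φ(·,·,θ)) → 0 and d(φ_{κ_j}(·,·,θ), φ(·,·,θ)) → 0 as j → ∞. -/

import Mathlib

open MeasureTheory Filter Topology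
open scoped ENNReal NNReal

/-- Componentwise (Euclidean) projection onto the hypercube `Set.Icc a b`. -/
noncomputable def projBox {k : ℕ} (a b : Fin k → ℝ) (s : Fin k → ℝ) : Fin k → ℝ :=
  fun i => max (a i) (min (b i) (s i))

/-- The majorizing map `φ^κ(s,ε,θ) = proj_S [φ(proj_S[s + κe], ε, θ) + κe]`. -/
noncomputable def phiUp {k l : ℕ} {E : Type*} (a b : Fin k → ℝ)
    (φ : (Fin k → ℝ) → E → (Fin l → ℝ) → (Fin k → ℝ)) (κ : ℝ)
    (s : Fin k → ℝ) (ε : E) (θ : Fin l → ℝ) : Fin k → ℝ :=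
  projBox a b (fun i => φ (projBox a b (fun j => s j + κ)) ε θ i + κ)

/-- The minorizing map `φ_κ(s,ε,θ) = proj_S [φ(proj_S[s − κe], ε, θ) − κe]`. -/
noncomputable def phiDown {k l : ℕ} {E : Type*} (a b : Fin k → ℝ)
    (φ : (Fin k → ℝ) → E → (Fin l → ℝ) → (Fin k → ℝ)) (κ : ℝ)
    (s : Fin k → ℝ) (ε : E) (θ : Fin l → ℝ) : Fin k → ℝ :=
  projBox a b (fun i => φ (projBox a b (fun j => s j - κ)) ε θ i - κ)

/-- `μ` is an invariant probability (supported on the hypercube `Set.Icc a b`)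
for the random map `ψ : S × E → S`:  `μ(A) = ∫ Q{ε : ψ(s,ε) ∈ A} μ(ds)`. -/
def IsInvariantProb {k : ℕ} {E : Type*} [MeasurableSpace E] (Q : Measure E)
    (a b : Fin k → ℝ) (ψ : (Fin k → ℝ) → E → (Fin k → ℝ))
    (μ : Measure (Fin k → ℝ)) : Prop :=
  IsProbabilityMeasure μ ∧ μ (Set.Icc a b)ᶜ = 0 ∧
    ∀ A : Set (Fin k → ℝ), MeasurableSet A →
      μ A = ∫⁻ s, Q {ε | ψ s ε ∈ A} ∂μ

/-- The Feller property (A.3) on the hypercube `Set.Icc a b` for a random map `ψ`. -/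
def FellerOn {k : ℕ} {E : Type*} [MeasurableSpace E] (Q : Measure E)
    (a b : Fin k → ℝ) (ψ : (Fin k → ℝ) → E → (Fin k → ℝ)) : Prop :=
  ∀ f : (Fin k → ℝ) → ℝ, Continuous f →
    ∀ (u : ℕ → Fin k → ℝ) (s : Fin k → ℝ),
      (∀ n, u n ∈ Set.Icc a b) → s ∈ Set.Icc a b → Tendsto u atTop (𝓝 s) →
      Tendsto (fun n => ∫ ε, f (ψ (u n) ε) ∂Q) atTop (𝓝 (∫ ε, f (ψ s ε) ∂Q))

/-- The distance `d` of (2.2) between two random maps, using the max norm on `ℝ^k`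
(the sup norm is the default norm on `Fin k → ℝ`). -/
noncomputable def dParam {k : ℕ} {E : Type*} [MeasurableSpace E] (Q : Measure E)
    (a b : Fin k → ℝ) (ψ χ : (Fin k → ℝ) → E → (Fin k → ℝ)) : ℝ :=
  ⨆ s : Set.Icc a b, ∫ ε, ‖ψ s ε - χ s ε‖ ∂Q

/-- Sample path of the random dynamical system `s_n = φ(s_{n-1}, ε_n, θ)` started at `s₀`. -/
def path {k l : ℕ} {E : Type*} (φ : (Fin k → ℝ) → E → (Fin l → ℝ) → (Fin k → ℝ))
    (θ : Fin l → ℝ) (s₀ : Fin k → ℝ) (ω : ℕ → E) : ℕ → Fin k → ℝ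
  | 0 => s₀
  | n + 1 => φ (path φ θ s₀ ω n) (ω n) θ

/-- `γ` is the countable product `Q^{⊗ℕ}`, characterized on cylinder sets. -/
def IsProductOf {E : Type*} [MeasurableSpace E] (Q : Measure E)
    (γ : Measure (ℕ → E)) : Prop :=
  IsProbabilityMeasure γ ∧
    ∀ (n : ℕ) (A : Fin n → Set E), (∀ i, MeasurableSet (A i)) →
      γ {ω | ∀ i : Fin n, ω i ∈ A i} = ∏ i, Q (A i)

/-- `Ψ(·,θ)` is (uniformly) continuous on `S`; `Ψ^{κ_j}(·,θ) → Ψ(·,θ)` uniformly on `S`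
for any positive `κ_j → 0`; and consequently `d(φ^{κ_j}(·,·,θ), φ(·,·,θ)) → 0` and
`d(φ_{κ_j}(·,·,θ), φ(·,·,θ)) → 0`. -/
theorem stmt1 {k l : ℕ} (a b : Fin k → ℝ) (hab : ∀ i, a i < b i)
    {E : Type*} [MeasurableSpace E] (Q : Measure E) [IsProbabilityMeasure Q]
    (Θ : Set (Fin l → ℝ)) (hΘ : IsCompact Θ)
    (φ : (Fin k → ℝ) → E → (Fin l → ℝ) → (Fin k → ℝ))
    (hmaps : ∀ θ ∈ Θ, ∀ s ∈ Set.Icc a b, ∀ ε, φ s ε θ ∈ Set.Icc a b)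
    (hA1 : Measurable fun q : (Fin k → ℝ) × E × (Fin l → ℝ) => φ q.1 q.2.1 q.2.2)
    (hA2 : ∀ ε, ∀ θ ∈ Θ, MonotoneOn (fun s => φ s ε θ) (Set.Icc a b))
    (hA3 : ∀ θ ∈ Θ, FellerOn Q a b (fun s ε => φ s ε θ))
    (θ : Fin l → ℝ) (hθ : θ ∈ Θ) :
    ContinuousOn (fun s => ∫ ε, φ s ε θ ∂Q) (Set.Icc a b) ∧
    UniformContinuousOn (fun s => ∫ ε, φ s ε θ ∂Q) (Set.Icc a b) ∧
    ∀ κs : ℕ → ℝ, (∀ j, 0 < κs j) → Tendsto κs atTop (𝓝 0) →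
      TendstoUniformlyOn
        (fun j s => ∫ ε, φ (projBox a b (fun i => s i + κs j)) ε θ ∂Q)
        (fun s => ∫ ε, φ s ε θ ∂Q) atTop (Set.Icc a b) ∧
      Tendsto (fun j => dParam Q a b (fun s ε => phiUp a b φ (κs j) s ε θ)
        (fun s ε => φ s ε θ)) atTop (𝓝 0) ∧
      Tendsto (fun j => dParam Q a b (fun s ε => phiDown a b φ (κs j) s ε θ)
        (fun s ε => φ s ε θ)) atTop (𝓝 0) := by
  classical
  have hab' : a ≤ b := fun i => (hab i).le
  set S : Set (Fin k → ℝ) := Set.Icc a b with hSdef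
  set Ψ : (Fin k → ℝ) → (Fin k → ℝ) := fun s => ∫ ε, φ s ε θ ∂Q with hΨdef
  -- measurability in ε
  have hmeas : ∀ s, Measurable fun ε => φ s ε θ := fun s =>
    hA1.comp (measurable_const.prodMk (measurable_id.prodMk measurable_const))
  -- a uniform bound on S
  obtain ⟨C, hC⟩ : ∃ C, ∀ x ∈ S, ‖x‖ ≤ C :=
    isBounded_iff_forall_norm_le.1 (isCompact_Icc (a := a) (b := b)).isBounded
  -- integrability
  have hint : ∀ s ∈ S, Integrable (fun ε => φ s ε θ) Q := fun s hs =>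
    ⟨(hmeas s).aestronglyMeasurable,
      HasFiniteIntegral.of_bounded (C := C)
        (ae_of_all _ fun ε => hC _ (hmaps θ hθ s hs ε))⟩
  have hintc : ∀ s ∈ S, ∀ i, Integrable (fun ε => φ s ε θ i) Q := fun s hs i =>
    ⟨(((continuous_apply i).measurable).comp (hmeas s)).aestronglyMeasurable,
      HasFiniteIntegral.of_bounded (C := C)
        (ae_of_all _ fun ε =>
          (norm_le_pi_norm (φ s ε θ) i).trans (hC _ (hmaps θ hθ s hs ε)))⟩
  have happ : ∀ s ∈ S, ∀ i, Ψ s i = ∫ ε, φ s ε θ i ∂Q := fun s hs i =>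
    ((ContinuousLinearMap.proj (R := ℝ) (φ := fun _ : Fin k => ℝ) i).integral_comp_comm
      (hint s hs)).symm
  -- projBox facts
  have hpbmem : ∀ t, projBox a b t ∈ S := by
    intro t
    constructor <;> intro i
    · exact le_max_left _ _
    · exact max_le (hab' i) (min_le_left _ _)
  have hupc : ∀ (κ : ℝ), 0 ≤ κ → ∀ v ∈ S, ∀ i,
      v i ≤ projBox a b (fun j => v j + κ) i ∧
      projBox a b (fun j => v j + κ) i ≤ v i + κ := by
    intro κ hκ v hv i
    have h1 : a i ≤ v i := hv.1 i
    have h2 : v i ≤ b i := hv.2 i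
    simp only [projBox]
    constructor
    · exact le_max_of_le_right (le_min h2 (by linarith))
    · exact max_le (by linarith) (min_le_right _ _)
  have hdownc : ∀ (κ : ℝ), 0 ≤ κ → ∀ v ∈ S, ∀ i,
      v i - κ ≤ projBox a b (fun j => v j - κ) i ∧
      projBox a b (fun j => v j - κ) i ≤ v i := by
    intro κ hκ v hv i
    have h1 : a i ≤ v i := hv.1 i
    have h2 : v i ≤ b i := hv.2 i
    simp only [projBox]
    constructor
    · exact le_max_of_le_right (le_min (by linarith) le_rfl)
    · exact max_le h1 ((min_le_right _ _).trans (by linarith))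
  -- continuity of Ψ on S
  have hcont : ContinuousOn Ψ S := by
    intro s hs
    have : Tendsto Ψ (𝓝[S] s) (𝓝 (Ψ s)) := by
      rw [tendsto_iff_seq_tendsto]
      intro u hu
      have humem : ∀ᶠ n in atTop, u n ∈ S := hu self_mem_nhdsWithin
      set u' : ℕ → Fin k → ℝ := fun n => if u n ∈ S then u n else s with hu'def
      have hmem' : ∀ n, u' n ∈ S := by
        intro n; by_cases h : u n ∈ S <;> simp [hu'def, h, hs]
      have hEq : u' =ᶠ[atTop] u := humem.mono fun n hn => by simp [hu'def, hn]
      have htend' : Tendsto u' atTop (𝓝 s) :=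
        ((hu.mono_right nhdsWithin_le_nhds).congr' hEq.symm)
      have hΨ' : Tendsto (fun n => Ψ (u' n)) atTop (𝓝 (Ψ s)) := by
        rw [tendsto_pi_nhds]
        intro i
        have h3 := hA3 θ hθ (fun x => x i) (continuous_apply i) u' s hmem' hs htend'
        have e1 : (fun n => Ψ (u' n) i) = fun n => ∫ ε, φ (u' n) ε θ i ∂Q :=
          funext fun n => happ (u' n) (hmem' n) i
        rw [e1, happ s hs i]
        exact h3
      exact hΨ'.congr' (hEq.mono fun n hn => by simp only [Function.comp_apply, hn])
    exact this
  have hucont : UniformContinuousOn Ψ S :=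
    (isCompact_Icc (a := a) (b := b)).uniformContinuousOn_of_continuous hcont
  refine ⟨hcont, hucont, ?_⟩
  intro κs hpos hlim
  -- key estimate
  have key : ∀ (κ : ℝ), 0 ≤ κ → ∀ p ∈ S, ∀ q ∈ S, (∀ ε, φ p ε θ ≤ φ q ε θ) →
      ∀ r ∈ S, ∀ w : E → (Fin k → ℝ), Measurable w → (∀ ε, w ε ∈ S) →
      (∀ ε i, |w ε i - φ r ε θ i| ≤ κ + ∑ j, (φ q ε θ j - φ p ε θ j)) →
      ∫ ε, ‖w ε - φ r ε θ‖ ∂Q ≤ κ + k * dist (Ψ q) (Ψ p) := by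
    intro κ hκ p hp q hq hpq r hr w hwmeas hwS hbound
    have hwint : Integrable w Q :=
      ⟨hwmeas.aestronglyMeasurable,
        HasFiniteIntegral.of_bounded (C := C) (ae_of_all _ fun ε => hC _ (hwS ε))⟩
    have hlint : Integrable (fun ε => ‖w ε - φ r ε θ‖) Q := (hwint.sub (hint r hr)).norm
    have hsint : Integrable (fun ε => ∑ j, (φ q ε θ j - φ p ε θ j)) Q :=
      integrable_finset_sum _ fun j _ => (hintc q hq j).sub (hintc p hp j)
    have hrint : Integrable (fun ε => κ + ∑ j, (φ q ε θ j - φ p ε θ j)) Q :=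
      (integrable_const κ).add hsint
    have hptw : ∀ ε, ‖w ε - φ r ε θ‖ ≤ κ + ∑ j, (φ q ε θ j - φ p ε θ j) := by
      intro ε
      have hnn : 0 ≤ κ + ∑ j, (φ q ε θ j - φ p ε θ j) :=
        add_nonneg hκ (Finset.sum_nonneg fun j _ => sub_nonneg.2 (hpq ε j))
      rw [pi_norm_le_iff_of_nonneg hnn]
      intro i
      simpa [Real.norm_eq_abs] using hbound ε i
    calc ∫ ε, ‖w ε - φ r ε θ‖ ∂Q
        ≤ ∫ ε, (κ + ∑ j, (φ q ε θ j - φ p ε θ j)) ∂Q :=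
          integral_mono hlint hrint hptw
      _ = κ + ∑ j, (Ψ q j - Ψ p j) := by
          rw [integral_add (integrable_const κ) hsint, integral_const, probReal_univ,
            one_smul, integral_finset_sum (f := fun j ε => φ q ε θ j - φ p ε θ j) _
              (fun j _ => (hintc q hq j).sub (hintc p hp j))]
          congr 1
          refine Finset.sum_congr rfl fun j _ => ?_
          rw [integral_sub (hintc q hq j) (hintc p hp j), happ q hq j, happ p hp j]
      _ ≤ κ + k * dist (Ψ q) (Ψ p) := by
          have : ∑ j, (Ψ q j - Ψ p j) ≤ ∑ _j : Fin k, dist (Ψ q) (Ψ p) := by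
            refine Finset.sum_le_sum fun j _ => ?_
            calc Ψ q j - Ψ p j ≤ |Ψ q j - Ψ p j| := le_abs_self _
              _ = dist (Ψ q j) (Ψ p j) := (Real.dist_eq _ _).symm
              _ ≤ dist (Ψ q) (Ψ p) := dist_le_pi_dist _ _ j
          simp only [Finset.sum_const, Finset.card_univ, Fintype.card_fin,
            nsmul_eq_mul] at this
          linarith
  -- uniform convergence part
  have hTU : TendstoUniformlyOn
      (fun j s => ∫ ε, φ (projBox a b (fun i => s i + κs j)) ε θ ∂Q)
      Ψ atTop S := by
    rw [Metric.tendstoUniformlyOn_iff]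
    intro ε hε
    obtain ⟨δ, hδ, hδ'⟩ := Metric.uniformContinuousOn_iff.1 hucont ε hε
    have hev : ∀ᶠ j in atTop, κs j < δ := hlim (Iio_mem_nhds hδ)
    filter_upwards [hev] with j hj s hs
    have hκ := (hpos j).le
    set t := projBox a b (fun i => s i + κs j) with htdef
    have ht : t ∈ S := hpbmem _
    have hd : dist t s ≤ κs j := by
      rw [dist_pi_le_iff hκ]
      intro i
      rw [Real.dist_eq, abs_le]
      have := hupc (κs j) hκ s hs i
      constructor <;> [linarith [this.2]; linarith [this.1]]
    have := hδ' t ht s hs (lt_of_le_of_lt hd hj)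
    rw [dist_comm]
    exact this
  -- generic dParam convergence
  have hD : ∀ W : ℕ → (Fin k → ℝ) → E → (Fin k → ℝ),
      (∀ j s, Measurable (W j s)) →
      (∀ j s ε, W j s ε ∈ S) →
      (∀ j, ∀ s ∈ S, ∃ t ∈ S, dist t s ≤ κs j ∧
        (((∀ ε, φ s ε θ ≤ φ t ε θ) ∧
            ∀ ε i, |W j s ε i - φ s ε θ i| ≤ κs j + ∑ m, (φ t ε θ m - φ s ε θ m)) ∨
         ((∀ ε, φ t ε θ ≤ φ s ε θ) ∧
            ∀ ε i, |W j s ε i - φ s ε θ i| ≤ κs j + ∑ m, (φ s ε θ m - φ t ε θ m)))) →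
      Tendsto (fun j => dParam Q a b (fun s ε => W j s ε) (fun s ε => φ s ε θ))
        atTop (𝓝 0) := by
    intro W hWmeas hWS hWb
    rw [Metric.tendsto_nhds]
    intro ε hε
    have hε2 : 0 < ε / 2 := by linarith
    have hε' : 0 < ε / (2 * (k + 1)) := by positivity
    set ε' := ε / (2 * (k + 1)) with hε'def
    obtain ⟨δ, hδ, hδ'⟩ := Metric.uniformContinuousOn_iff.1 hucont ε' hε'
    have hev : ∀ᶠ j in atTop, κs j < min δ (ε / 2) :=
      hlim (Iio_mem_nhds (lt_min hδ hε2))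
    filter_upwards [hev] with j hj
    have hκ := (hpos j).le
    have hjδ : κs j < δ := lt_of_lt_of_le hj (min_le_left _ _)
    have hbnd : (k : ℝ) * ε' ≤ ε / 2 := by
      have hknn : (0:ℝ) ≤ (k:ℝ) := Nat.cast_nonneg k
      have hne : ((k:ℝ) + 1) ≠ 0 := by positivity
      have hcalc : ((k:ℝ) + 1) * ε' = ε / 2 := by
        rw [hε'def]; field_simp
      nlinarith [hε'.le]
    have hnn : (0:ℝ) ≤ dParam Q a b (fun s ε => W j s ε) (fun s ε => φ s ε θ) :=
      Real.iSup_nonneg fun s => integral_nonneg fun ε => norm_nonneg _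
    have hfin : κs j + (k:ℝ) * ε' < ε := by
      have h1 : κs j < ε / 2 := lt_of_lt_of_le hj (min_le_right _ _)
      linarith
    have hmain : dParam Q a b (fun s ε => W j s ε) (fun s ε => φ s ε θ) < ε := by
      rw [dParam]
      refine lt_of_le_of_lt (Real.iSup_le ?_ (by positivity)) hfin
      rintro ⟨s, hs⟩
      obtain ⟨t, ht, hd, hcase⟩ := hWb j s hs
      have hdΨ : dist (Ψ t) (Ψ s) ≤ ε' := (hδ' t ht s hs (lt_of_le_of_lt hd hjδ)).le
      have hkε : ∀ x y : Fin k → ℝ, dist x y ≤ ε' → (k:ℝ) * dist x y ≤ (k:ℝ) * ε' :=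
        fun x y h => mul_le_mul_of_nonneg_left h (Nat.cast_nonneg k)
      rcases hcase with ⟨hmono, hbd⟩ | ⟨hmono, hbd⟩
      · calc ∫ ε, ‖W j s ε - φ s ε θ‖ ∂Q
            ≤ κs j + k * dist (Ψ t) (Ψ s) :=
              key (κs j) hκ s hs t ht hmono s hs _ (hWmeas j s) (hWS j s) hbd
          _ ≤ κs j + (k:ℝ) * ε' := by
              have := hkε _ _ hdΨ; linarith
      · calc ∫ ε, ‖W j s ε - φ s ε θ‖ ∂Q
            ≤ κs j + k * dist (Ψ s) (Ψ t) :=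
              key (κs j) hκ t ht s hs hmono s hs _ (hWmeas j s) (hWS j s) hbd
          _ ≤ κs j + (k:ℝ) * ε' := by
              have h2 : dist (Ψ s) (Ψ t) ≤ ε' := by rwa [dist_comm]
              have := hkε _ _ h2; linarith
    rw [Real.dist_eq, sub_zero, abs_of_nonneg hnn]
    exact hmain
  refine ⟨hTU, ?_, ?_⟩
  · -- phiUp
    refine hD (fun j s ε => phiUp a b φ (κs j) s ε θ) ?_ ?_ ?_
    · intro j s
      have hc : Continuous fun v : Fin k → ℝ => projBox a b (fun i => v i + κs j) := by
        unfold projBox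
        exact continuous_pi fun i => continuous_const.max
          (continuous_const.min ((continuous_apply i).add continuous_const))
      exact hc.measurable.comp (hmeas (projBox a b fun i => s i + κs j))
    · intro j s ε; exact hpbmem _
    · intro j s hs
      have hκ := (hpos j).le
      set t := projBox a b (fun i => s i + κs j) with htdef
      have ht : t ∈ S := hpbmem _
      have hst : s ≤ t := fun i => (hupc (κs j) hκ s hs i).1
      have hd : dist t s ≤ κs j := by
        rw [dist_pi_le_iff hκ]
        intro i
        rw [Real.dist_eq, abs_le]
        have h := hupc (κs j) hκ s hs i
        constructor <;> [linarith [h.2]; linarith [h.1]]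
      refine ⟨t, ht, hd, Or.inl ⟨fun ε => hA2 ε θ hθ hs ht hst, ?_⟩⟩
      intro ε i
      have hmono : ∀ ε, φ s ε θ ≤ φ t ε θ := fun ε => hA2 ε θ hθ hs ht hst
      have hv := hmaps θ hθ t ht ε
      have h1 := (hupc (κs j) hκ (φ t ε θ) hv i).1
      have h2 := (hupc (κs j) hκ (φ t ε θ) hv i).2
      have h3 : φ s ε θ i ≤ φ t ε θ i := hmono ε i
      have h4 : φ t ε θ i - φ s ε θ i ≤ ∑ m, (φ t ε θ m - φ s ε θ m) :=
        Finset.single_le_sum (fun m _ => sub_nonneg.2 (hmono ε m)) (Finset.mem_univ i)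
      have hwdef : phiUp a b φ (κs j) s ε θ i =
          projBox a b (fun m => φ t ε θ m + κs j) i := rfl
      rw [abs_le]
      constructor <;> [linarith [hwdef ▸ h1]; linarith [hwdef ▸ h2]]
  · -- phiDown
    refine hD (fun j s ε => phiDown a b φ (κs j) s ε θ) ?_ ?_ ?_
    · intro j s
      have hc : Continuous fun v : Fin k → ℝ => projBox a b (fun i => v i - κs j) := by
        unfold projBox
        exact continuous_pi fun i => continuous_const.max
          (continuous_const.min ((continuous_apply i).sub continuous_const))
      exact hc.measurable.comp (hmeas (projBox a b fun i => s i - κs j))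
    · intro j s ε; exact hpbmem _
    · intro j s hs
      have hκ := (hpos j).le
      set t := projBox a b (fun i => s i - κs j) with htdef
      have ht : t ∈ S := hpbmem _
      have hst : t ≤ s := fun i => (hdownc (κs j) hκ s hs i).2
      have hd : dist t s ≤ κs j := by
        rw [dist_pi_le_iff hκ]
        intro i
        rw [Real.dist_eq, abs_le]
        have h := hdownc (κs j) hκ s hs i
        constructor <;> [linarith [h.2]; linarith [h.1]]
      refine ⟨t, ht, hd, Or.inr ⟨fun ε => hA2 ε θ hθ ht hs hst, ?_⟩⟩
      intro ε i
      have hmono : ∀ ε, φ t ε θ ≤ φ s ε θ := fun ε => hA2 ε θ hθ ht hs hst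
      have hv := hmaps θ hθ t ht ε
      have h1 := (hdownc (κs j) hκ (φ t ε θ) hv i).1
      have h2 := (hdownc (κs j) hκ (φ t ε θ) hv i).2
      have h3 : φ t ε θ i ≤ φ s ε θ i := hmono ε i
      have h4 : φ s ε θ i - φ t ε θ i ≤ ∑ m, (φ s ε θ m - φ t ε θ m) :=
        Finset.single_le_sum (fun m _ => sub_nonneg.2 (hmono ε m)) (Finset.mem_univ i)
      have hwdef : phiDown a b φ (κs j) s ε θ i =
          projBox a b (fun m => φ t ε θ m - κs j) i := rfl
      rw [abs_le]
      constructor <;> [linarith [hwdef ▸ h1]; linarith [hwdef ▸ h2]]
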